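/- Trace-difference formula under removing one column: Let X be an M × N complex matrix with first column x_1, let X^{(1)} be the matrix obtained by removing the first column, and for z with Im z > 0 set G(z) = (X†X − z)^{−1}, G^{(1)}(z) = ((X^{(1)})†X^{(1)} − z)^{−1}, and 𝒢^{(1)}(z) = (X^{(1)}(X^{(1)})† − z)^{−1}. Then tr G(z) − tr G^{(1)}(z) + z^{−1} = (G_{11}(z) + z^{−1}) + (x_1, X^{(1)} G^{(1)}(z) G^{(1)}(z) (X^{(1)})† x_1) / ( −z − z (x_1, 𝒢^{(1)}(z) x_1) ) = z G_{11}(z) · (x_1, (𝒢^{(1)}(z))² x_1). -/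

import Mathlib

open Matrix

noncomputable section

/-- Removing the first column of a matrix with `N+1` columns. -/
def dropFirst {M N : ℕ} (Q : Matrix (Fin M) (Fin (N + 1)) ℂ) : Matrix (Fin M) (Fin N) ℂ :=
  Matrix.of fun i j => Q i j.succ

/-- The quadratic form `(v, A v) = v† A v`. -/
def qForm {M : ℕ} (v : Fin M → ℂ) (A : Matrix (Fin M) (Fin M) ℂ) : ℂ :=
  dotProduct (star v) (A.mulVec v)

namespace TDaux

lemma isUnit_det_resolvent {m n : ℕ} (W : Matrix (Fin m) (Fin n) ℂ) {z : ℂ} (hz : z.im ≠ 0) :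
    IsUnit (Wᴴ * W - z • 1).det := by
  rw [isUnit_iff_ne_zero]
  intro hdet
  obtain ⟨v, hv, hmv⟩ := Matrix.exists_mulVec_eq_zero_iff.2 hdet
  have h1 : star v ⬝ᵥ ((Wᴴ * W) *ᵥ v) = z * (star v ⬝ᵥ v) := by
    have h0 : star v ⬝ᵥ ((Wᴴ * W - z • 1) *ᵥ v) = 0 := by rw [hmv, dotProduct_zero]
    rw [Matrix.sub_mulVec, Matrix.smul_mulVec, Matrix.one_mulVec, dotProduct_sub,
      dotProduct_smul, smul_eq_mul, sub_eq_zero] at h0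
    exact h0
  have h2 : star (W *ᵥ v) ⬝ᵥ (W *ᵥ v) = z * (star v ⬝ᵥ v) := by
    calc star (W *ᵥ v) ⬝ᵥ (W *ᵥ v) = (star v ᵥ* Wᴴ) ⬝ᵥ (W *ᵥ v) := by rw [star_mulVec]
      _ = star v ⬝ᵥ (Wᴴ *ᵥ (W *ᵥ v)) := (dotProduct_mulVec _ _ _).symm
      _ = star v ⬝ᵥ ((Wᴴ * W) *ᵥ v) := by rw [Matrix.mulVec_mulVec]
      _ = z * (star v ⬝ᵥ v) := h1
  have hdot : ∀ {k : ℕ} (y : Fin k → ℂ), star y ⬝ᵥ y = ((∑ i, Complex.normSq (y i) : ℝ) : ℂ) := by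
    intro k y
    simp only [dotProduct, Pi.star_apply, Complex.ofReal_sum, Complex.star_def]
    exact Finset.sum_congr rfl fun i _ => by rw [mul_comm, Complex.mul_conj]
  rw [hdot, hdot] at h2
  have him := congrArg Complex.im h2
  simp only [Complex.ofReal_im, Complex.mul_im, Complex.ofReal_re, mul_zero, add_zero,
    zero_add] at him
  have hsum : ∑ i, Complex.normSq (v i) = 0 := by
    rcases mul_eq_zero.1 him.symm with h | h
    · exact absurd h hz
    · exact h
  apply hv
  funext i
  exact Complex.normSq_eq_zero.1
    ((Finset.sum_eq_zero_iff_of_nonneg (fun i _ => Complex.normSq_nonneg (v i))).1 hsum i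
      (Finset.mem_univ i))

lemma isUnit_det_resolvent' {m n : ℕ} (W : Matrix (Fin m) (Fin n) ℂ) {z : ℂ} (hz : z.im ≠ 0) :
    IsUnit (W * Wᴴ - z • 1).det := by
  have := isUnit_det_resolvent Wᴴ hz
  rwa [conjTranspose_conjTranspose] at this

lemma swap_inv {m n : ℕ} (W : Matrix (Fin m) (Fin n) ℂ) {z : ℂ} (hz : z.im ≠ 0) :
    W * (Wᴴ * W - z • 1)⁻¹ = (W * Wᴴ - z • 1)⁻¹ * W := by
  have hB := isUnit_det_resolvent W hz
  have hD := isUnit_det_resolvent' W hz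
  have key : (W * Wᴴ - z • 1) * W = W * (Wᴴ * W - z • 1) := by
    simp only [Matrix.sub_mul, Matrix.mul_sub, Matrix.smul_mul, Matrix.mul_smul,
      Matrix.one_mul, Matrix.mul_one, Matrix.mul_assoc]
  have h := congrArg (fun A => (W * Wᴴ - z • 1)⁻¹ * A * (Wᴴ * W - z • 1)⁻¹) key
  simp only [← Matrix.mul_assoc] at h
  rw [Matrix.nonsing_inv_mul _ hD, Matrix.one_mul] at h
  rw [Matrix.mul_assoc ((W * Wᴴ - z • 1)⁻¹ * W), Matrix.mul_nonsing_inv _ hB,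
    Matrix.mul_one] at h
  exact h

lemma resolvent_formula {m n : ℕ} (W : Matrix (Fin m) (Fin n) ℂ) {z : ℂ} (hz : z.im ≠ 0) :
    (Wᴴ * W - z • 1)⁻¹ = z⁻¹ • (Wᴴ * (W * Wᴴ - z • 1)⁻¹ * W - 1) := by
  have hz0 : z ≠ 0 := fun h => by simp [h] at hz
  have hB := isUnit_det_resolvent W hz
  have hsw := swap_inv W hz
  set B := Wᴴ * W - z • 1 with hBdef
  have hWW : Wᴴ * W = B + z • 1 := by rw [hBdef]; abel
  have h1 : Wᴴ * (W * Wᴴ - z • 1)⁻¹ * W = 1 + z • B⁻¹ := by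
    rw [Matrix.mul_assoc, ← hsw, ← Matrix.mul_assoc, hWW, Matrix.add_mul,
      Matrix.mul_nonsing_inv _ hB, Matrix.smul_mul, Matrix.one_mul]
  rw [h1, add_sub_cancel_left, smul_smul, inv_mul_cancel₀ hz0, one_smul]

lemma trace_resolvent {m n : ℕ} (W : Matrix (Fin m) (Fin n) ℂ) {z : ℂ} (hz : z.im ≠ 0) :
    ((Wᴴ * W - z • 1)⁻¹).trace = ((W * Wᴴ - z • 1)⁻¹).trace + z⁻¹ * ((m : ℂ) - n) := by
  have hz0 : z ≠ 0 := fun h => by simp [h] at hz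
  have hD := isUnit_det_resolvent' W hz
  have hres := resolvent_formula W hz
  set D := W * Wᴴ - z • 1 with hDdef
  have hWW : W * Wᴴ = D + z • 1 := by rw [hDdef]; abel
  have h1 : (Wᴴ * D⁻¹ * W).trace = (m : ℂ) + z * D⁻¹.trace := by
    rw [Matrix.mul_assoc, Matrix.trace_mul_comm]
    rw [Matrix.mul_assoc D⁻¹ W Wᴴ, hWW, Matrix.mul_add, Matrix.nonsing_inv_mul _ hD,
      Matrix.mul_smul, Matrix.mul_one, trace_add, trace_one, trace_smul, smul_eq_mul]
    simp [Fintype.card_fin]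
  rw [hres, trace_smul, trace_sub, trace_one, h1, smul_eq_mul]
  simp only [Fintype.card_fin]
  field_simp
  ring

end TDaux

/-- **Trace-difference formula under removing one column** (equation (4.9)):
`tr G − tr G⁽¹⁾ + z⁻¹
  = (G₁₁ + z⁻¹) + (x₁, X⁽¹⁾G⁽¹⁾G⁽¹⁾(X⁽¹⁾)† x₁)/(−z − z (x₁, 𝒢⁽¹⁾ x₁))
  = z G₁₁ (x₁, (𝒢⁽¹⁾)² x₁)`. -/
theorem trace_difference_one_column
    (M N : ℕ) (X : Matrix (Fin M) (Fin (N + 1)) ℂ) (z : ℂ) (hz : 0 < z.im) :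
    ((Xᴴ * X - z • 1)⁻¹).trace - (((dropFirst X)ᴴ * dropFirst X - z • 1)⁻¹).trace + z⁻¹ =
      (((Xᴴ * X - z • 1)⁻¹ : Matrix (Fin (N + 1)) (Fin (N + 1)) ℂ) 0 0 + z⁻¹) +
        qForm (fun i => X i 0)
          (dropFirst X * ((dropFirst X)ᴴ * dropFirst X - z • 1)⁻¹ *
            ((dropFirst X)ᴴ * dropFirst X - z • 1)⁻¹ * (dropFirst X)ᴴ) /
          (-z - z * qForm (fun i => X i 0)
            ((dropFirst X * (dropFirst X)ᴴ - z • 1)⁻¹)) ∧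
    ((Xᴴ * X - z • 1)⁻¹).trace - (((dropFirst X)ᴴ * dropFirst X - z • 1)⁻¹).trace + z⁻¹ =
      z * ((Xᴴ * X - z • 1)⁻¹ : Matrix (Fin (N + 1)) (Fin (N + 1)) ℂ) 0 0 *
        qForm (fun i => X i 0)
          ((dropFirst X * (dropFirst X)ᴴ - z • 1)⁻¹ *
            (dropFirst X * (dropFirst X)ᴴ - z • 1)⁻¹) := by
  have hz' : z.im ≠ 0 := ne_of_gt hz
  have hz0 : z ≠ 0 := fun h => by simp [h] at hz'
  set Y := dropFirst X with hY
  set x : Fin M → ℂ := fun i => X i 0 with hx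
  have hBu := TDaux.isUnit_det_resolvent Y hz'
  have hCu := TDaux.isUnit_det_resolvent' Y hz'
  have hDu := TDaux.isUnit_det_resolvent' X hz'
  set B := Yᴴ * Y - z • 1 with hBdef
  set C := Y * Yᴴ - z • 1 with hCdef
  set D := X * Xᴴ - z • 1 with hDdef
  -- rank one decomposition
  have hrank : X * Xᴴ = Y * Yᴴ + vecMulVec x (star x) := by
    ext i j
    simp only [mul_apply, conjTranspose_apply, vecMulVec_apply, Matrix.add_apply,
      Fin.sum_univ_succ, hY, dropFirst, of_apply, Pi.star_apply, hx]
    ring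
  have hDC : D = C + vecMulVec x (star x) := by rw [hDdef, hCdef, hrank]; abel
  have hDC' : D * C⁻¹ = 1 + vecMulVec x (star x) * C⁻¹ := by
    rw [hDC, Matrix.add_mul, Matrix.mul_nonsing_inv _ hCu]
  have hkey : C⁻¹ = D⁻¹ + D⁻¹ * (vecMulVec x (star x) * C⁻¹) := by
    calc C⁻¹ = D⁻¹ * (D * C⁻¹) := by
          rw [← Matrix.mul_assoc, Matrix.nonsing_inv_mul _ hDu, Matrix.one_mul]
      _ = _ := by rw [hDC', Matrix.mul_add, Matrix.mul_one]
  set u := D⁻¹ *ᵥ x with hu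
  set w := C⁻¹ *ᵥ x with hw
  set q := star x ⬝ᵥ w with hqdef
  set s := star x ⬝ᵥ (C⁻¹ *ᵥ w) with hsdef
  have hvv : ∀ (y : Fin M → ℂ), vecMulVec x (star x) *ᵥ y = (star x ⬝ᵥ y) • x := by
    intro y; funext i
    simp only [Matrix.mulVec, dotProduct, vecMulVec_apply, Pi.smul_apply, smul_eq_mul,
      Pi.star_apply]
    rw [Finset.sum_mul]
    exact Finset.sum_congr rfl fun j _ => by ring
  have hwu : w = u + q • u := by
    calc w = (D⁻¹ + D⁻¹ * (vecMulVec x (star x) * C⁻¹)) *ᵥ x := by rw [← hkey, hw]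
      _ = u + q • u := by
          rw [Matrix.add_mulVec, ← Matrix.mulVec_mulVec, ← Matrix.mulVec_mulVec, ← hw,
            hvv w, Matrix.mulVec_smul, ← hu, ← hqdef]
  have hwu' : w = (1 + q) • u := by rw [hwu, add_smul, one_smul]
  have ht : (1 : ℂ) + q ≠ 0 := by
    intro h
    have hq0 : q = 0 := by
      have h1 : q = (1 + q) * (star x ⬝ᵥ u) := by
        conv_lhs => rw [hqdef, hwu']
        rw [dotProduct_smul, smul_eq_mul]
      rw [h1, h, zero_mul]
    rw [hq0, add_zero] at h; exact one_ne_zero h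
  have hut : u = (1 + q)⁻¹ • w := by
    rw [hwu', smul_smul, inv_mul_cancel₀ ht, one_smul]
  have hxu : star x ⬝ᵥ u = (1 + q)⁻¹ * q := by
    rw [hut, dotProduct_smul, smul_eq_mul, ← hqdef]
  have hcu : star x ⬝ᵥ (C⁻¹ *ᵥ u) = (1 + q)⁻¹ * s := by
    rw [hut, Matrix.mulVec_smul, dotProduct_smul, smul_eq_mul, ← hsdef]
  have htrv : ∀ (E : Matrix (Fin M) (Fin M) ℂ),
      (E * vecMulVec x (star x)).trace = star x ⬝ᵥ (E *ᵥ x) := by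
    intro E
    simp only [Matrix.trace, Matrix.diag_apply, mul_apply, vecMulVec_apply, dotProduct,
      Matrix.mulVec, Pi.star_apply, Finset.mul_sum]
    exact Finset.sum_congr rfl fun i _ => Finset.sum_congr rfl fun j _ => by ring
  have htrdiff : C⁻¹.trace - D⁻¹.trace = (1 + q)⁻¹ * s := by
    have h := congrArg Matrix.trace hkey
    rw [Matrix.trace_add] at h
    have h2 : (D⁻¹ * (vecMulVec x (star x) * C⁻¹)).trace = (1 + q)⁻¹ * s := by
      rw [Matrix.trace_mul_comm, Matrix.mul_assoc, Matrix.trace_mul_comm, htrv,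
        ← Matrix.mulVec_mulVec, ← hu, hcu]
    rw [h2] at h
    rw [h]; ring
  -- entry formula
  have hXEX : ∀ (E : Matrix (Fin M) (Fin M) ℂ),
      (Xᴴ * E * X) 0 0 = star x ⬝ᵥ (E *ᵥ x) := by
    intro E
    simp only [mul_apply, conjTranspose_apply, dotProduct, Matrix.mulVec, Pi.star_apply,
      hx, Finset.sum_mul, Finset.mul_sum]
    rw [Finset.sum_comm]
    exact Finset.sum_congr rfl fun i _ => Finset.sum_congr rfl fun j _ => by ring
  have hresX := TDaux.resolvent_formula X hz'
  rw [← hDdef] at hresX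
  have hg : ((Xᴴ * X - z • 1)⁻¹ : Matrix (Fin (N + 1)) (Fin (N + 1)) ℂ) 0 0
      = z⁻¹ * ((1 + q)⁻¹ * q - 1) := by
    rw [hresX, Matrix.smul_apply, Matrix.sub_apply, Matrix.one_apply_eq, hXEX, ← hu, hxu,
      smul_eq_mul]
  -- traces
  have htrA : ((Xᴴ * X - z • 1)⁻¹).trace = D⁻¹.trace + z⁻¹ * ((M : ℂ) - (N + 1)) := by
    have h := TDaux.trace_resolvent X hz'
    rw [← hDdef] at h
    rw [h]; push_cast; ring
  have htrB : (B⁻¹).trace = C⁻¹.trace + z⁻¹ * ((M : ℂ) - N) := by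
    have h := TDaux.trace_resolvent Y hz'
    rw [← hBdef, ← hCdef] at h
    exact h
  have hmain : ((Xᴴ * X - z • 1)⁻¹).trace - B⁻¹.trace + z⁻¹ = -((1 + q)⁻¹ * s) := by
    rw [htrA, htrB]
    have hD' : D⁻¹.trace = C⁻¹.trace - (1 + q)⁻¹ * s := by rw [← htrdiff]; ring
    rw [hD']; ring
  -- qForm values
  have hq1 : qForm x C⁻¹ = q := by rw [hqdef, hw]; rfl
  have hq2 : qForm x (C⁻¹ * C⁻¹) = s := by
    rw [hsdef, hw, Matrix.mulVec_mulVec]; rfl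
  have hsw := TDaux.swap_inv Y hz'
  rw [← hBdef, ← hCdef] at hsw
  have hYY : Y * Yᴴ = C + z • 1 := by rw [hCdef]; abel
  have hYB : Y * B⁻¹ * B⁻¹ * Yᴴ = C⁻¹ + z • (C⁻¹ * C⁻¹) := by
    calc Y * B⁻¹ * B⁻¹ * Yᴴ
        = C⁻¹ * Y * B⁻¹ * Yᴴ := by rw [hsw]
      _ = C⁻¹ * (Y * B⁻¹) * Yᴴ := by rw [Matrix.mul_assoc C⁻¹ Y B⁻¹]
      _ = C⁻¹ * (C⁻¹ * Y) * Yᴴ := by rw [hsw]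
      _ = C⁻¹ * C⁻¹ * (Y * Yᴴ) := by simp only [Matrix.mul_assoc]
      _ = C⁻¹ * C⁻¹ * C + z • (C⁻¹ * C⁻¹) := by
          rw [hYY, Matrix.mul_add, Matrix.mul_smul, Matrix.mul_one]
      _ = C⁻¹ + z • (C⁻¹ * C⁻¹) := by
          rw [Matrix.mul_assoc, Matrix.nonsing_inv_mul _ hCu, Matrix.mul_one]
  have hq3 : qForm x (Y * B⁻¹ * B⁻¹ * Yᴴ) = q + z * s := by
    rw [hYB]
    show star x ⬝ᵥ ((C⁻¹ + z • (C⁻¹ * C⁻¹)) *ᵥ x) = q + z * s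
    rw [Matrix.add_mulVec, Matrix.smul_mulVec, dotProduct_add, dotProduct_smul,
      smul_eq_mul, ← hw, ← hqdef, ← Matrix.mulVec_mulVec, ← hw, ← hsdef]
  refine ⟨?_, ?_⟩
  · rw [hmain, hg, hq1, hq3]
    have hden : -z - z * q = -(z * (1 + q)) := by ring
    rw [hden]
    field_simp
    ring
  · rw [hmain, hg, hq2]
    field_simp
    ring

end
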